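/- arXiv:2302.07831 — 3 statements merged into one kernel-verified Lean document; each statement's English description precedes it below -/
import Mathlib

section
/- Let N ≥ 2 be an integer, let u0 ∈ C([0,1]) be positive, and let u be a global classical solution of problem (P) with initial data u0. Then min_{r∈[0,1]} u(r,t) → ∞ as t → ∞. -/
open Set Filter Topology Real

/-- A global classical solution of problem (P): the radially symmetric mean curvature flow
`u_t = u_rr/(1+u_r^2) + ((N-1)/r) u_r` on `(0,1) × (0,∞)` with Robin boundary conditions
`u_r(0,t) = 0`, `u_r(1,t) = u(1,t)` and initial data `u0`. The functions `ur`, `urr`, `ut`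
represent the partial derivatives of `u`. -/
def IsGlobalClassicalSolution (N : ℕ) (u ur urr ut : ℝ → ℝ → ℝ) (u0 : ℝ → ℝ) : Prop :=
  ContinuousOn (fun p : ℝ × ℝ => u p.1 p.2) (Icc 0 1 ×ˢ Ici 0) ∧
  ContinuousOn (fun p : ℝ × ℝ => ur p.1 p.2) (Icc 0 1 ×ˢ Ioi 0) ∧
  ContinuousOn (fun p : ℝ × ℝ => urr p.1 p.2) (Icc 0 1 ×ˢ Ioi 0) ∧
  ContinuousOn (fun p : ℝ × ℝ => ut p.1 p.2) (Icc 0 1 ×ˢ Ioi 0) ∧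
  (∀ t > (0:ℝ), ∀ r ∈ Icc (0:ℝ) 1, HasDerivWithinAt (fun s => u s t) (ur r t) (Icc 0 1) r) ∧
  (∀ t > (0:ℝ), ∀ r ∈ Icc (0:ℝ) 1, HasDerivWithinAt (fun s => ur s t) (urr r t) (Icc 0 1) r) ∧
  (∀ t > (0:ℝ), ∀ r ∈ Icc (0:ℝ) 1, HasDerivAt (fun tau => u r tau) (ut r t) t) ∧
  (∀ t > (0:ℝ), ∀ r ∈ Ioo (0:ℝ) 1,
    ut r t = urr r t / (1 + (ur r t) ^ 2) + (((N : ℝ) - 1) / r) * ur r t) ∧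
  (∀ t > (0:ℝ), ur 0 t = 0) ∧
  (∀ t > (0:ℝ), ur 1 t = u 1 t) ∧
  (∀ r ∈ Icc (0:ℝ) 1, u r 0 = u0 r)

/-- Second derivative test at a (possibly one-sided) minimum on `[0,1]`. -/
lemma second_deriv_nonneg_at_min (f f' : ℝ → ℝ) (f''a : ℝ) (a : ℝ) (ha0 : 0 ≤ a) (ha1 : a < 1)
    (hd1 : ∀ r ∈ Icc (0:ℝ) 1, HasDerivWithinAt f (f' r) (Icc 0 1) r)
    (hd2 : HasDerivWithinAt f' f''a (Icc 0 1) a)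
    (hmin : ∀ r ∈ Icc (0:ℝ) 1, f a ≤ f r)
    (hfa : f' a = 0) : 0 ≤ f''a := by
  by_contra h
  push_neg at h
  have hslope : Tendsto (slope f' a) (𝓝[Icc 0 1 \ {a}] a) (𝓝 f''a) :=
    hasDerivWithinAt_iff_tendsto_slope.mp hd2
  have hev : ∀ᶠ s in 𝓝[Icc 0 1 \ {a}] a, slope f' a s < 0 :=
    hslope.eventually_lt_const h
  rw [eventually_nhdsWithin_iff] at hev
  rw [Metric.eventually_nhds_iff] at hev
  obtain ⟨δ, hδ, hball⟩ := hev
  set b := min (a + δ/2) 1 with hb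
  have hab : a < b := lt_min (by linarith) ha1
  have hb1 : b ≤ 1 := min_le_right _ _
  have hsub : Icc a b ⊆ Icc 0 1 := Icc_subset_Icc ha0 hb1
  have hcont : ContinuousOn f (Icc a b) := fun x hx =>
    ((hd1 x (hsub hx)).continuousWithinAt).mono hsub
  have hderiv : ∀ x ∈ Ioo a b, HasDerivAt f (f' x) x := by
    intro x hx
    have hx01 : x ∈ Ioo (0:ℝ) 1 := ⟨lt_of_le_of_lt ha0 hx.1, lt_of_lt_of_le hx.2 hb1⟩
    exact (hd1 x (Ioo_subset_Icc_self hx01)).hasDerivAt (Icc_mem_nhds hx01.1 hx01.2)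
  obtain ⟨ξ, hξ, hξeq⟩ := exists_hasDerivAt_eq_slope f f' hab hcont hderiv
  have hξ01 : ξ ∈ Icc (0:ℝ) 1 := hsub (Ioo_subset_Icc_self hξ)
  have hfb : f a ≤ f b := hmin b (hsub ⟨le_of_lt hab, le_refl b⟩)
  have hξpos : 0 ≤ f' ξ := by
    rw [hξeq]; exact div_nonneg (by linarith) (by linarith [hξ.1, hξ.2, hab])
  have hdist : dist ξ a < δ := by
    rw [Real.dist_eq, abs_of_pos (by linarith [hξ.1] : (0:ℝ) < ξ - a)]
    have : b ≤ a + δ/2 := min_le_left _ _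
    linarith [hξ.2]
  have := hball hdist ⟨hξ01, by simp; linarith [hξ.1]⟩
  have hslopeξ : 0 ≤ slope f' a ξ := by
    rw [slope_def_field, hfa]
    have : 0 < ξ - a := by linarith [hξ.1]
    exact div_nonneg (by simpa using hξpos) (le_of_lt this)
  linarith

set_option maxHeartbeats 1600000 in
/-- `min_{r ∈ [0,1]} u(r,t) → ∞` as `t → ∞`. -/
theorem min_tendsto_atTop (N : ℕ) (hN : 2 ≤ N) (u0 : ℝ → ℝ)
    (hu0c : ContinuousOn u0 (Icc 0 1)) (hu0pos : ∀ r ∈ Icc (0:ℝ) 1, 0 < u0 r)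
    (u ur urr ut : ℝ → ℝ → ℝ) (hu : IsGlobalClassicalSolution N u ur urr ut u0) :
    Tendsto (fun t => sInf ((fun r => u r t) '' Icc (0:ℝ) 1)) atTop atTop := by
  obtain ⟨hUc, hURc, hURRc, hUTc, hDr, hDrr, hDt, hPDE, hBC0, hBC1, hInit⟩ := hu
  have hN2 : (2:ℝ) ≤ (N:ℝ) := by exact_mod_cast hN
  have hNpos : (0:ℝ) < (N:ℝ) := by linarith
  have hN0 : (N:ℝ) ≠ 0 := ne_of_gt hNpos
  -- minimum of u0
  obtain ⟨r0, hr0, hminr0⟩ := isCompact_Icc.exists_isMinOn (⟨0, by norm_num⟩ :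
    (Icc (0:ℝ) 1).Nonempty) hu0c
  set M := u0 r0 with hM
  have hMpos : 0 < M := hu0pos r0 hr0
  have hMle : ∀ r ∈ Icc (0:ℝ) 1, M ≤ u0 r := fun r hr => hminr0 hr
  -- subsolution parameters
  set ε := min (M/2) (1/2 : ℝ) with hε
  have hεpos : 0 < ε := lt_min (by linarith) (by norm_num)
  have hεM : ε ≤ M/2 := min_le_left _ _
  have hεhalf : ε ≤ 1/2 := min_le_right _ _
  -- subsolution and w = u - v
  set c : ℝ := ε/(2*(N:ℝ)) with hc
  have hcpos : 0 < c := div_pos hεpos (by linarith)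
  set v : ℝ → ℝ → ℝ := fun r t => ε*(1 + r^2/(2*(N:ℝ))) + c*t with hv
  set w : ℝ → ℝ → ℝ := fun r t => u r t - v r t with hw
  -- basic bounds on v at a point of Icc
  have hvle : ∀ r ∈ Icc (0:ℝ) 1, ∀ t : ℝ, v r t ≤ ε*(5/4) + c*t := by
    intro r hr t
    have h1 : r^2 ≤ 1 := by nlinarith [hr.1, hr.2]
    have h2 : r^2/(2*(N:ℝ)) ≤ 1/4 := by
      rw [div_le_iff₀ (by linarith)]
      nlinarith
    simp only [hv]
    nlinarith
  have hvge : ∀ r : ℝ, ∀ t : ℝ, ε + c*t ≤ v r t := by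
    intro r t
    have h1 : 0 ≤ r^2/(2*(N:ℝ)) := div_nonneg (sq_nonneg r) (by linarith)
    simp only [hv]
    nlinarith
  clear_value M ε c v w
  -- the key positivity claim
  have key : ∀ t : ℝ, 0 ≤ t → ∀ r ∈ Icc (0:ℝ) 1, 0 < w r t := by
    by_contra hcon
    push_neg at hcon
    obtain ⟨T, hT0, rT, hrT, hwT⟩ := hcon
    set A := {t : ℝ | 0 ≤ t ∧ ∃ r ∈ Icc (0:ℝ) 1, w r t ≤ 0} with hA
    have hAne : A.Nonempty := ⟨T, hT0, rT, hrT, hwT⟩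
    have hAbdd : BddBelow A := ⟨0, fun t ht => ht.1⟩
    set ts := sInf A with hts
    have hts0 : 0 ≤ ts := le_csInf hAne (fun t ht => ht.1)
    -- continuity of w
    have hvcont : Continuous (fun p : ℝ × ℝ => v p.1 p.2) := by
      rw [hv]; fun_prop
    have hWc : ContinuousOn (fun p : ℝ × ℝ => w p.1 p.2) (Icc 0 1 ×ˢ Ici 0) := by
      rw [hw]; exact hUc.sub hvcont.continuousOn
    -- a sequence in A converging to ts
    have hseq : ∀ n : ℕ, ∃ t ∈ A, t < ts + 1/(n+1) :=
      fun n => Real.lt_sInf_add_pos hAne (by positivity)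
    choose tseq htseqA htseqlt using hseq
    have htseqge : ∀ n, ts ≤ tseq n := fun n => csInf_le hAbdd (htseqA n)
    have htseq : Tendsto tseq atTop (𝓝 ts) := by
      have h1 : Tendsto (fun n : ℕ => ts + 1/(n+1)) atTop (𝓝 (ts + 0)) :=
        tendsto_const_nhds.add tendsto_one_div_add_atTop_nhds_zero_nat
      rw [add_zero] at h1
      exact tendsto_of_tendsto_of_tendsto_of_le_of_le tendsto_const_nhds h1 htseqge
        (fun n => le_of_lt (htseqlt n))
    choose rseq hrseqI hrseqw using (fun n => (htseqA n).2)
    obtain ⟨rs, hrsI, φ, hφ, hrφ⟩ := isCompact_Icc.tendsto_subseq hrseqI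
    have hpair : Tendsto (fun n => (rseq (φ n), tseq (φ n))) atTop
        (𝓝[Icc 0 1 ×ˢ Ici 0] (rs, ts)) := by
      rw [tendsto_nhdsWithin_iff]
      exact ⟨hrφ.prodMk_nhds (htseq.comp hφ.tendsto_atTop),
        Eventually.of_forall (fun n => ⟨hrseqI (φ n), (htseqA (φ n)).1⟩)⟩
    have hwrs : w rs ts ≤ 0 := by
      have hct : Tendsto (fun n => w (rseq (φ n)) (tseq (φ n))) atTop (𝓝 (w rs ts)) :=
        (hWc (rs, ts) ⟨hrsI, hts0⟩).tendsto.comp hpair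
      exact le_of_tendsto hct (Eventually.of_forall (fun n => hrseqw (φ n)))
    -- ts is positive
    have htspos : 0 < ts := by
      rcases lt_or_eq_of_le hts0 with h | h
      · exact h
      · exfalso
        rw [← h] at hwrs
        have h1 : u rs 0 = u0 rs := hInit rs hrsI
        have h2 := hvle rs hrsI 0
        have h3 := hMle rs hrsI
        rw [hw] at hwrs
        simp only at hwrs
        rw [h1] at hwrs
        nlinarith
    -- positivity before ts
    have hbefore : ∀ t, 0 ≤ t → t < ts → ∀ r ∈ Icc (0:ℝ) 1, 0 < w r t := by
      intro t ht0 htlt r hr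
      by_contra hc2
      push_neg at hc2
      exact absurd (csInf_le hAbdd ⟨ht0, r, hr, hc2⟩) (not_le.mpr htlt)
    clear_value ts
    -- nonnegativity at ts
    have hge0 : ∀ r ∈ Icc (0:ℝ) 1, 0 ≤ w r ts := by
      intro r hr
      have hcont1 : ContinuousOn (fun t => w r t) (Ici 0) := by
        have := hWc.comp (Continuous.continuousOn
          (continuous_const.prodMk continuous_id) : ContinuousOn (fun t : ℝ => (r, t)) (Ici 0))
          (fun t ht => ⟨hr, ht⟩)
        exact this
      haveI hl : (𝓝[Ico 0 ts] ts).NeBot := by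
        rw [← mem_closure_iff_nhdsWithin_neBot, closure_Ico (ne_of_lt htspos)]
        exact ⟨hts0, le_refl ts⟩
      have htd : Tendsto (fun t => w r t) (𝓝[Ico 0 ts] ts) (𝓝 (w r ts)) :=
        ((hcont1 ts hts0)).mono_left (nhdsWithin_mono ts (fun x hx => hx.1))
      refine ge_of_tendsto htd ?_
      filter_upwards [self_mem_nhdsWithin] with t ht
      exact le_of_lt (hbefore t ht.1 ht.2 r hr)
    have weq : w rs ts = 0 := le_antisymm hwrs (hge0 rs hrsI)
    -- time derivative at (rs, ts) is ≤ 0, i.e. ut rs ts ≤ c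
    have hut_le : ut rs ts ≤ c := by
      have hWt : HasDerivAt (fun t => w rs t) (ut rs ts - c) ts := by
        have h1 := hDt ts htspos rs hrsI
        have h2 : HasDerivAt (fun t => v rs t) c ts := by
          rw [hv]
          simpa using ((hasDerivAt_id ts).const_mul c).const_add (ε*(1 + rs^2/(2*(N:ℝ))))
        rw [hw]
        exact h1.sub h2
      have h4 : Tendsto (slope (fun t => w rs t) ts) (𝓝[Iio ts \ {ts}] ts) (𝓝 (ut rs ts - c)) :=
        hasDerivWithinAt_iff_tendsto_slope.mp (hWt.hasDerivWithinAt (s := Iio ts))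
      have h5 : Iio ts \ {ts} = Iio ts := diff_singleton_eq_self (by simp)
      rw [h5] at h4
      have h6 : ∀ᶠ t in 𝓝[Iio ts] ts, slope (fun t => w rs t) ts t ≤ 0 := by
        filter_upwards [Ioo_mem_nhdsLT_of_mem (⟨htspos, le_refl ts⟩ : ts ∈ Ioc 0 ts)] with t ht
        rw [slope_def_field, weq]
        have hpos := hbefore t (le_of_lt ht.1) ht.2 rs hrsI
        rw [div_nonpos_iff]
        left
        exact ⟨by linarith, by linarith [ht.2]⟩
      have := le_of_tendsto h4 h6
      linarith
    -- spatial derivative structure at time ts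
    have hvd : ∀ r : ℝ, HasDerivAt (fun s => v s ts) (ε*r/(N:ℝ)) r := by
      intro r
      rw [hv]
      have h1 : HasDerivAt (fun s : ℝ => s^2) (2*r) r := by simpa using hasDerivAt_pow 2 r
      have h2 := (((h1.div_const (2*(N:ℝ))).const_add 1).const_mul ε).add_const (c*ts)
      rw [show ε*r/(N:ℝ) = ε * (2 * r / (2 * (N:ℝ))) by ring]
      exact h2
    have hFd : ∀ r ∈ Icc (0:ℝ) 1,
        HasDerivWithinAt (fun s => w s ts) (ur r ts - ε*r/(N:ℝ)) (Icc 0 1) r := by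
      intro r hr
      rw [hw]
      exact (hDr ts htspos r hr).sub (hvd r).hasDerivWithinAt
    have hvd2 : ∀ r : ℝ, HasDerivAt (fun s : ℝ => ε*s/(N:ℝ)) (ε/(N:ℝ)) r := by
      intro r
      have := ((hasDerivAt_id r).const_mul ε).div_const (N:ℝ)
      simpa using this
    have hFd2 : ∀ r ∈ Icc (0:ℝ) 1,
        HasDerivWithinAt (fun s => ur s ts - ε*s/(N:ℝ)) (urr r ts - ε/(N:ℝ)) (Icc 0 1) r :=
      fun r hr => (hDrr ts htspos r hr).sub (hvd2 r).hasDerivWithinAt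
    have hFmin : ∀ r ∈ Icc (0:ℝ) 1, w rs ts ≤ w r ts := by
      intro r hr; rw [weq]; exact hge0 r hr
    -- case analysis on the location of the minimum point rs
    rcases eq_or_lt_of_le hrsI.2 with hb1 | hb1
    · -- rs = 1 : boundary case, contradiction with Robin condition
      subst hb1
      have hF1 : Tendsto (slope (fun s => w s ts) 1) (𝓝[Ico 0 1] 1)
          (𝓝 (ur 1 ts - ε*1/(N:ℝ))) := by
        have h := hasDerivWithinAt_iff_tendsto_slope.mp (hFd 1 (by norm_num))
        rwa [Icc_sdiff_right] at h
      haveI hnb : (𝓝[Ico (0:ℝ) 1] 1).NeBot := by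
        rw [← mem_closure_iff_nhdsWithin_neBot, closure_Ico (by norm_num : (0:ℝ) ≠ 1)]
        norm_num
      have hle : ur 1 ts - ε*1/(N:ℝ) ≤ 0 := by
        refine le_of_tendsto hF1 ?_
        filter_upwards [self_mem_nhdsWithin] with s hs
        rw [slope_def_field, div_nonpos_iff]
        left
        have h0' : 0 ≤ w s ts := hge0 s (Ico_subset_Icc_self hs)
        exact ⟨by rw [weq]; linarith, by linarith [hs.2]⟩
      have hu1 : ur 1 ts = u 1 ts := hBC1 ts htspos
      have hu1v : u 1 ts = v 1 ts := by
        have h := weq; rw [hw] at h; simp only at h; linarith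
      have hvb := hvge 1 ts
      have hcts : 0 < c * ts := mul_pos hcpos htspos
      rw [hu1, hu1v] at hle
      have heq1 : ε*1/(N:ℝ) = ε/(N:ℝ) := by ring
      rw [heq1] at hle
      have hεN : ε/(N:ℝ) ≤ ε/2 :=
        div_le_div_of_nonneg_left (le_of_lt hεpos) (by norm_num) hN2
      linarith
    rcases eq_or_lt_of_le hrsI.1 with hb0 | hb0
    · -- rs = 0 : center case
      subst hb0
      have hF'0 : ur 0 ts - ε*0/(N:ℝ) = 0 := by
        rw [hBC0 ts htspos]; ring
      have hsec : 0 ≤ urr 0 ts - ε/(N:ℝ) :=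
        second_deriv_nonneg_at_min (fun s => w s ts) (fun s => ur s ts - ε*s/(N:ℝ))
          (urr 0 ts - ε/(N:ℝ)) 0 le_rfl (by norm_num) hFd (hFd2 0 (by norm_num)) hFmin hF'0
      -- PDE limit at r = 0 : ut 0 ts = N * urr 0 ts
      set l := 𝓝[Ioo (0:ℝ) 1] (0:ℝ) with hldef
      haveI : l.NeBot := by
        rw [hldef, ← mem_closure_iff_nhdsWithin_neBot, closure_Ioo (by norm_num : (0:ℝ) ≠ 1)]
        norm_num
      have hmono1 : l ≤ 𝓝[Icc (0:ℝ) 1] 0 := nhdsWithin_mono _ Ioo_subset_Icc_self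
      have hmono2 : l ≤ 𝓝[Icc (0:ℝ) 1 \ {0}] 0 :=
        nhdsWithin_mono _ (fun x hx => ⟨Ioo_subset_Icc_self hx, by simp [ne_of_gt hx.1]⟩)
      have hcompt : ∀ g : ℝ → ℝ → ℝ, ContinuousOn (fun p : ℝ×ℝ => g p.1 p.2) (Icc 0 1 ×ˢ Ioi 0) →
          Tendsto (fun r => g r ts) l (𝓝 (g 0 ts)) := by
        intro g hg
        have hc : ContinuousOn (fun r => g r ts) (Icc 0 1) :=
          hg.comp (Continuous.continuousOn (continuous_id.prodMk continuous_const))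
            (fun r hr => ⟨hr, htspos⟩)
        exact (hc 0 (by norm_num)).mono_left hmono1
      have hut0 := hcompt ut hUTc
      have hurr0 := hcompt urr hURRc
      have hur0 := hcompt ur hURc
      rw [hBC0 ts htspos] at hur0
      have hslope2 : Tendsto (fun r => ur r ts / r) l (𝓝 (urr 0 ts)) := by
        have h := (hasDerivWithinAt_iff_tendsto_slope.mp
          (hDrr ts htspos 0 (by norm_num))).mono_left hmono2
        refine Tendsto.congr' ?_ h
        filter_upwards [self_mem_nhdsWithin] with r hr
        rw [slope_def_field, hBC0 ts htspos, sub_zero, sub_zero]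
      have hcomb : Tendsto (fun r => urr r ts / (1 + (ur r ts)^2) + ((N:ℝ)-1) * (ur r ts / r)) l
          (𝓝 (urr 0 ts / (1 + (0:ℝ)^2) + ((N:ℝ)-1) * urr 0 ts)) := by
        refine Tendsto.add ?_ (tendsto_const_nhds.mul hslope2)
        exact hurr0.div (tendsto_const_nhds.add (hur0.pow 2)) (by norm_num)
      have hutlim : Tendsto (fun r => ut r ts)
          l (𝓝 (urr 0 ts / (1 + (0:ℝ)^2) + ((N:ℝ)-1) * urr 0 ts)) := by
        refine Tendsto.congr' ?_ hcomb
        filter_upwards [self_mem_nhdsWithin] with r hr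
        rw [hPDE ts htspos r hr]
        ring
      have huteq : ut 0 ts = (N:ℝ) * urr 0 ts := by
        have h := tendsto_nhds_unique hut0 hutlim
        rw [h]
        norm_num
        ring
      have hfinal : ε ≤ ut 0 ts := by
        rw [huteq]
        have heq2 : ε = (N:ℝ) * (ε/(N:ℝ)) := by field_simp
        rw [heq2]
        exact mul_le_mul_of_nonneg_left (by linarith) (le_of_lt hNpos)
      have hclt : c < ε := by
        rw [hc, div_lt_iff₀ (by linarith : (0:ℝ) < 2*(N:ℝ))]
        nlinarith
      linarith
    · -- interior case
      have hloc : IsLocalMin (fun s => w s ts) rs :=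
        Filter.eventually_of_mem (Icc_mem_nhds hb0 hb1) (fun x hx => hFmin x hx)
      have hF'0 : ur rs ts - ε*rs/(N:ℝ) = 0 :=
        hloc.hasDerivAt_eq_zero ((hFd rs hrsI).hasDerivAt (Icc_mem_nhds hb0 hb1))
      have hsec : 0 ≤ urr rs ts - ε/(N:ℝ) :=
        second_deriv_nonneg_at_min _ _ _ rs (le_of_lt hb0) hb1 hFd (hFd2 rs hrsI) hFmin hF'0
      have hureq : ur rs ts = ε*rs/(N:ℝ) := by linarith
      have hPDErs := hPDE ts htspos rs ⟨hb0, hb1⟩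
      have hur_nonneg : 0 ≤ ur rs ts := by
        rw [hureq]
        positivity
      have hur_lt : ur rs ts < 1 := by
        rw [hureq, div_lt_iff₀ hNpos]
        nlinarith [hrsI.2]
      have hD : (1:ℝ) ≤ 1 + (ur rs ts)^2 := by nlinarith [sq_nonneg (ur rs ts)]
      have hsq : (ur rs ts)^2 ≤ 1 := by
        rw [sq]
        exact mul_le_one₀ (le_of_lt hur_lt) hur_nonneg (le_of_lt hur_lt)
      have hD2 : 1 + (ur rs ts)^2 ≤ 2 := by linarith
      have hurr_pos : ε/(N:ℝ) ≤ urr rs ts := by linarith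
      have hεNpos : 0 < ε/(N:ℝ) := div_pos hεpos hNpos
      have hterm1 : ε/(N:ℝ)/2 ≤ urr rs ts / (1 + (ur rs ts)^2) := by
        calc ε/(N:ℝ)/2 ≤ urr rs ts / 2 := by linarith
          _ ≤ urr rs ts / (1 + (ur rs ts)^2) :=
              div_le_div_of_nonneg_left (by linarith) (by linarith) hD2
      have hterm2 : ((N:ℝ)-1)/rs * ur rs ts = ((N:ℝ)-1)*ε/(N:ℝ) := by
        have hrs0 : rs ≠ 0 := ne_of_gt hb0
        rw [hureq, div_mul_div_comm,
          show ((N:ℝ)-1)*(ε*rs) = (((N:ℝ)-1)*ε)*rs from by ring, mul_comm rs (N:ℝ),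
          mul_div_mul_right _ _ hrs0]
      have hterm2pos : 0 < ((N:ℝ)-1)*ε/(N:ℝ) := by
        exact div_pos (mul_pos (by linarith) hεpos) hNpos
      have hgt : ε/(N:ℝ)/2 < ut rs ts := by
        rw [hPDErs, hterm2]
        linarith
      have hc2 : c = ε/(N:ℝ)/2 := by rw [hc]; ring
      linarith

  -- conclusion
  have hmono : ∀ᶠ t in atTop, ε + c*t ≤ sInf ((fun r => u r t) '' Icc (0:ℝ) 1) := by
    filter_upwards [eventually_ge_atTop (0:ℝ)] with t ht
    apply le_csInf
    · exact ⟨u 0 t, mem_image_of_mem _ (by norm_num)⟩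
    · rintro x ⟨r, hr, rfl⟩
      have h1 := key t ht r hr
      have h2 := hvge r t
      simp only [hw] at h1
      linarith
  refine tendsto_atTop_mono' atTop hmono ?_
  exact tendsto_atTop_add_const_left atTop ε (Tendsto.const_mul_atTop hcpos tendsto_id)
end

section
/- Let N ≥ 2 be an integer and m0 > 0, and define u̲(r,t) = m0 e^{(r^2-1)/2 + (N-1)t}. Then u̲ is a lower solution of problem (P): for all r ∈ (0,1] and all t ∈ ℝ, ∂_t u̲(r,t) ≤ ∂_{rr} u̲(r,t)/(1+(∂_r u̲(r,t))^2) + ((N-1)/r) ∂_r u̲(r,t); moreover ∂_r u̲(0,t) = 0 and ∂_r u̲(1,t) = u̲(1,t) for all t. -/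
open Set Filter Topology Real

/-- `u̲(r,t) = m0 e^{(r²-1)/2 + (N-1)t}` is a lower solution of problem (P):
its classical partial derivatives satisfy `∂_t u̲ ≤ ∂_rr u̲/(1+(∂_r u̲)²) + ((N-1)/r) ∂_r u̲`
on `(0,1] × ℝ`, together with the boundary relations. -/
theorem lower_solution (N : ℕ) (hN : 2 ≤ N) (m0 : ℝ) (hm0 : 0 < m0) :
    (∀ r t : ℝ, HasDerivAt (fun s : ℝ => m0 * Real.exp ((s ^ 2 - 1) / 2 + ((N : ℝ) - 1) * t))
      (r * (m0 * Real.exp ((r ^ 2 - 1) / 2 + ((N : ℝ) - 1) * t))) r) ∧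
    (∀ r t : ℝ, HasDerivAt (fun s : ℝ => s * (m0 * Real.exp ((s ^ 2 - 1) / 2 + ((N : ℝ) - 1) * t)))
      ((1 + r ^ 2) * (m0 * Real.exp ((r ^ 2 - 1) / 2 + ((N : ℝ) - 1) * t))) r) ∧
    (∀ r t : ℝ, HasDerivAt (fun tau : ℝ => m0 * Real.exp ((r ^ 2 - 1) / 2 + ((N : ℝ) - 1) * tau))
      (((N : ℝ) - 1) * (m0 * Real.exp ((r ^ 2 - 1) / 2 + ((N : ℝ) - 1) * t))) t) ∧
    (∀ r ∈ Ioc (0:ℝ) 1, ∀ t : ℝ,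
      ((N : ℝ) - 1) * (m0 * Real.exp ((r ^ 2 - 1) / 2 + ((N : ℝ) - 1) * t)) ≤
        (1 + r ^ 2) * (m0 * Real.exp ((r ^ 2 - 1) / 2 + ((N : ℝ) - 1) * t)) /
          (1 + (r * (m0 * Real.exp ((r ^ 2 - 1) / 2 + ((N : ℝ) - 1) * t))) ^ 2) +
        (((N : ℝ) - 1) / r) * (r * (m0 * Real.exp ((r ^ 2 - 1) / 2 + ((N : ℝ) - 1) * t)))) ∧
    (∀ t : ℝ, (0:ℝ) * (m0 * Real.exp (((0:ℝ) ^ 2 - 1) / 2 + ((N : ℝ) - 1) * t)) = 0) ∧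
    (∀ t : ℝ, (1:ℝ) * (m0 * Real.exp (((1:ℝ) ^ 2 - 1) / 2 + ((N : ℝ) - 1) * t)) =
      m0 * Real.exp (((1:ℝ) ^ 2 - 1) / 2 + ((N : ℝ) - 1) * t)) := by
  have hr : ∀ r t : ℝ, HasDerivAt (fun s : ℝ => m0 * Real.exp ((s ^ 2 - 1) / 2 + ((N : ℝ) - 1) * t))
      (r * (m0 * Real.exp ((r ^ 2 - 1) / 2 + ((N : ℝ) - 1) * t))) r := by
    intro r t
    have h1 : HasDerivAt (fun s : ℝ => (s ^ 2 - 1) / 2 + ((N : ℝ) - 1) * t) r r := by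
      have : HasDerivAt (fun s : ℝ => s ^ 2) (2 * r) r := by
        simpa using (hasDerivAt_pow 2 r)
      have := ((this.sub_const 1).div_const 2).add_const (((N : ℝ) - 1) * t)
      simpa [mul_comm] using this
    have := (h1.exp).const_mul m0
    refine this.congr_deriv ?_
    ring
  refine ⟨hr, ?_, ?_, ?_, ?_, ?_⟩
  · intro r t
    have := (hasDerivAt_id r).mul (hr r t)
    refine this.congr_deriv ?_
    simp only [id]
    ring
  · intro r t
    have h1 : HasDerivAt (fun tau : ℝ => (r ^ 2 - 1) / 2 + ((N : ℝ) - 1) * tau) ((N : ℝ) - 1) t := by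
      simpa using ((hasDerivAt_id t).const_mul ((N : ℝ) - 1)).const_add ((r ^ 2 - 1) / 2)
    have := (h1.exp).const_mul m0
    refine this.congr_deriv ?_
    ring
  · rintro r ⟨hr0, _⟩ t
    set u := m0 * Real.exp ((r ^ 2 - 1) / 2 + ((N : ℝ) - 1) * t) with hu
    have hupos : 0 < u := mul_pos hm0 (Real.exp_pos _)
    have h2 : (((N : ℝ) - 1) / r) * (r * u) = ((N : ℝ) - 1) * u := by
      field_simp
    rw [h2]
    have : 0 ≤ (1 + r ^ 2) * u / (1 + (r * u) ^ 2) := by positivity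
    linarith
  · intro t; ring
  · intro t; ring
end

section
/- Let N ≥ 2 be an integer, let u0 ∈ C([0,1]) be positive, and let u be a global classical solution of problem (P) with initial data u0. Then for every ε ∈ (0,1), the sup norm of u_r(·,t) on [ε,1] tends to infinity: sup_{r∈[ε,1]} |u_r(r,t)| → ∞ as t → ∞. -/
open Set Filter Topology Real

private lemma left_slope_nonneg {f : ℝ → ℝ} {d : ℝ}
    (hf : HasDerivWithinAt f d (Icc 0 1) 0)
    (hmin : ∀ y ∈ Icc (0:ℝ) 1, f 0 ≤ f y) : 0 ≤ d := by
  have hset : Icc (0:ℝ) 1 \ {0} = Ioc 0 1 := by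
    ext x
    simp only [mem_diff, mem_Icc, mem_singleton_iff, mem_Ioc]
    constructor
    · rintro ⟨⟨h0, h1⟩, hx⟩; exact ⟨lt_of_le_of_ne h0 (Ne.symm hx), h1⟩
    · rintro ⟨h0, h1⟩; exact ⟨⟨h0.le, h1⟩, ne_of_gt h0⟩
  have h := hasDerivWithinAt_iff_tendsto_slope.mp hf
  rw [hset, nhdsWithin_Ioc_eq_nhdsGT zero_lt_one] at h
  refine ge_of_tendsto h ?_
  filter_upwards [Ioc_mem_nhdsGT_of_mem (Set.left_mem_Ico.mpr zero_lt_one)] with y hy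
  rw [slope_def_field]
  have h1 : f 0 ≤ f y := hmin y ⟨hy.1.le, hy.2⟩
  have h2 : (0:ℝ) < y - 0 := by simpa using hy.1
  exact div_nonneg (by linarith) h2.le

private lemma right_slope_nonpos {f : ℝ → ℝ} {d : ℝ}
    (hf : HasDerivWithinAt f d (Icc 0 1) 1)
    (hmin : ∀ y ∈ Icc (0:ℝ) 1, f 1 ≤ f y) : d ≤ 0 := by
  have hset : Icc (0:ℝ) 1 \ {1} = Ico 0 1 := by
    ext x
    simp only [mem_diff, mem_Icc, mem_singleton_iff, mem_Ico]
    constructor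
    · rintro ⟨⟨h0, h1⟩, hx⟩; exact ⟨h0, lt_of_le_of_ne h1 hx⟩
    · rintro ⟨h0, h1⟩; exact ⟨⟨h0, h1.le⟩, ne_of_lt h1⟩
  have h := hasDerivWithinAt_iff_tendsto_slope.mp hf
  rw [hset, nhdsWithin_Ico_eq_nhdsLT zero_lt_one] at h
  refine le_of_tendsto h ?_
  filter_upwards [Ico_mem_nhdsLT_of_mem (Set.right_mem_Ioc.mpr zero_lt_one)] with y hy
  rw [slope_def_field]
  have h1 : f 1 ≤ f y := hmin y ⟨hy.1, hy.2.le⟩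
  have h2 : y - 1 < 0 := by linarith [hy.2]
  exact div_nonpos_of_nonneg_of_nonpos (by linarith) h2.le

private lemma second_deriv_test {f f' : ℝ → ℝ} {x f'' : ℝ}
    (hx : x ∈ Ioo (0:ℝ) 1)
    (hmin : ∀ y ∈ Icc (0:ℝ) 1, f x ≤ f y)
    (hf : ∀ y ∈ Icc (0:ℝ) 1, HasDerivWithinAt f (f' y) (Icc 0 1) y)
    (hf' : HasDerivAt f' f'' x) :
    f' x = 0 ∧ 0 ≤ f'' := by
  have hxI : x ∈ Icc (0:ℝ) 1 := ⟨hx.1.le, hx.2.le⟩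
  have hnhds : Icc (0:ℝ) 1 ∈ 𝓝 x := Icc_mem_nhds hx.1 hx.2
  have hfx : HasDerivAt f (f' x) x := (hf x hxI).hasDerivAt hnhds
  have hlocmin : IsLocalMin f x := Filter.eventually_of_mem hnhds hmin
  have hz : f' x = 0 := hlocmin.hasDerivAt_eq_zero hfx
  refine ⟨hz, ?_⟩
  by_contra hneg
  push_neg at hneg
  have hslope := hasDerivAt_iff_tendsto_slope.mp hf'
  have hev : ∀ᶠ y in 𝓝[≠] x, slope f' x y < 0 := hslope.eventually_lt_const hneg
  have hsub0 : Set.Ioi x ⊆ {x}ᶜ := fun y hy => hy.ne'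
  have hev' : ∀ᶠ y in 𝓝[>] x, slope f' x y < 0 :=
    hev.filter_mono (nhdsWithin_mono x hsub0)
  obtain ⟨a, ha, hsub⟩ := mem_nhdsGT_iff_exists_Ioo_subset.mp hev'
  set m : ℝ := min ((x + a) / 2) ((x + 1) / 2) with hm
  have hax : x < a := ha
  have hxm : x < m := by
    apply lt_min <;> nlinarith [hx.2]
  have hma : m < a := lt_of_le_of_lt (min_le_left _ _) (by linarith)
  have hm1 : m < 1 := lt_of_le_of_lt (min_le_right _ _) (by linarith [hx.2])
  have hmI : m ∈ Icc (0:ℝ) 1 := ⟨by linarith [hx.1], hm1.le⟩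
  have hanti : StrictAntiOn f (Icc x m) := by
    apply strictAntiOn_of_deriv_neg (convex_Icc x m)
    · apply ContinuousOn.mono (fun y hy => (hf y hy).continuousWithinAt)
      intro y hy
      exact ⟨by linarith [hy.1, hx.1], by linarith [hy.2]⟩
    · intro y hy
      rw [interior_Icc] at hy
      have hyI : y ∈ Ioo (0:ℝ) 1 := ⟨by linarith [hy.1, hx.1], by linarith [hy.2]⟩
      have hder : HasDerivAt f (f' y) y :=
        (hf y ⟨hyI.1.le, hyI.2.le⟩).hasDerivAt (Icc_mem_nhds hyI.1 hyI.2)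
      rw [hder.deriv]
      have hsl : slope f' x y < 0 := hsub ⟨hy.1, lt_trans hy.2 hma⟩
      rw [slope_def_field, hz, sub_zero] at hsl
      have : 0 < y - x := by linarith [hy.1]
      rcases div_neg_iff.mp hsl with h | h
      · linarith [h.2]
      · exact h.1
  have : f m < f x := hanti (left_mem_Icc.mpr hxm.le) (right_mem_Icc.mpr hxm.le) hxm
  exact absurd (hmin m hmI) (by linarith)

private lemma deriv_nonpos_of_first_zero {g : ℝ → ℝ} {t0 d : ℝ} (ht0 : 0 < t0)
    (hg : HasDerivAt g d t0) (hzero : g t0 = 0)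
    (hpos : ∀ t ∈ Ico (0:ℝ) t0, 0 < g t) : d ≤ 0 := by
  have hslope := hasDerivAt_iff_tendsto_slope.mp hg
  have hsub : Ioo (0:ℝ) t0 ⊆ {t0}ᶜ := fun y hy => ne_of_lt hy.2
  haveI hne : (𝓝[Ioo (0:ℝ) t0] t0).NeBot := by
    rw [← mem_closure_iff_nhdsWithin_neBot, closure_Ioo ht0.ne]
    exact ⟨ht0.le, le_refl _⟩
  have h := hslope.mono_left (nhdsWithin_mono t0 hsub)
  refine le_of_tendsto h ?_
  filter_upwards [self_mem_nhdsWithin] with y hy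
  rw [slope_def_field, hzero, sub_zero]
  exact le_of_lt (div_neg_of_pos_of_neg (hpos y ⟨hy.1.le, hy.2⟩) (by linarith [hy.2]))


private lemma comparison {N : ℕ} (hN : 2 ≤ N) {u ur urr ut : ℝ → ℝ → ℝ} {u0 : ℝ → ℝ} {δ : ℝ}
    (hδ : 0 < δ) (hu0 : ∀ r ∈ Icc (0:ℝ) 1, δ ≤ u0 r)
    (hcontu : ContinuousOn (fun p : ℝ × ℝ => u p.1 p.2) (Icc 0 1 ×ˢ Ici 0))
    (hdr : ∀ t > (0:ℝ), ∀ r ∈ Icc (0:ℝ) 1, HasDerivWithinAt (fun s => u s t) (ur r t) (Icc 0 1) r)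
    (hdr2 : ∀ t > (0:ℝ), ∀ r ∈ Icc (0:ℝ) 1, HasDerivWithinAt (fun s => ur s t) (urr r t) (Icc 0 1) r)
    (hdt : ∀ t > (0:ℝ), ∀ r ∈ Icc (0:ℝ) 1, HasDerivAt (fun tau => u r tau) (ut r t) t)
    (hpde : ∀ t > (0:ℝ), ∀ r ∈ Ioo (0:ℝ) 1,
      ut r t = urr r t / (1 + (ur r t) ^ 2) + (((N : ℝ) - 1) / r) * ur r t)
    (hbc0 : ∀ t > (0:ℝ), ur 0 t = 0)
    (hbc1 : ∀ t > (0:ℝ), ur 1 t = u 1 t)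
    (hinit : ∀ r ∈ Icc (0:ℝ) 1, u r 0 = u0 r) :
    ∀ t, 0 ≤ t → ∀ r ∈ Icc (0:ℝ) 1, δ/2 + δ/8*t + δ/4*r < u r t := by
  by_contra hcon
  push_neg at hcon
  obtain ⟨T, hT, r1, hr1, hle⟩ := hcon
  set w : ℝ × ℝ → ℝ := fun p => u p.1 p.2 - (δ/2 + δ/8*p.2 + δ/4*p.1) with hw
  have hCc : IsCompact (Icc (0:ℝ) 1 ×ˢ Icc (0:ℝ) T) := isCompact_Icc.prod isCompact_Icc
  have hCcl : IsClosed (Icc (0:ℝ) 1 ×ˢ Icc (0:ℝ) T) := isClosed_Icc.prod isClosed_Icc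
  have hwc : ContinuousOn w (Icc 0 1 ×ˢ Icc 0 T) := by
    apply ContinuousOn.sub
    · exact hcontu.mono (prod_mono_right (Icc_subset_Ici_self))
    · fun_prop
  set K : Set (ℝ × ℝ) := (Icc 0 1 ×ˢ Icc 0 T) ∩ w ⁻¹' (Iic 0) with hKdef
  have hKcl : IsClosed K := hwc.preimage_isClosed_of_isClosed hCcl isClosed_Iic
  have hKc : IsCompact K := hCc.of_isClosed_subset hKcl inter_subset_left
  set S : Set ℝ := Prod.snd '' K with hSdef
  have hSne : S.Nonempty := by
    refine ⟨T, ⟨(r1, T), ⟨⟨hr1, ⟨hT, le_refl T⟩⟩, ?_⟩, rfl⟩⟩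
    simp only [mem_preimage, mem_Iic, hw]
    linarith
  have hSc : IsCompact S := hKc.image continuous_snd
  set t0 : ℝ := sInf S with ht0def
  have ht0S : t0 ∈ S := hSc.sInf_mem hSne
  obtain ⟨p0, hp0K, hp0⟩ := ht0S
  set r0 : ℝ := p0.1 with hr0def
  have hr0I : r0 ∈ Icc (0:ℝ) 1 := hp0K.1.1
  have ht0I : t0 ∈ Icc (0:ℝ) T := hp0 ▸ hp0K.1.2
  have hwp0 : w (r0, t0) ≤ 0 := by
    have := hp0K.2
    rw [mem_preimage, mem_Iic] at this
    rwa [show (r0, t0) = p0 from Prod.ext rfl hp0.symm]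
  have ht0pos : 0 < t0 := by
    rcases lt_or_eq_of_le ht0I.1 with h | h
    · exact h
    · exfalso
      have h1 : u r0 0 = u0 r0 := hinit r0 hr0I
      have h2 : δ ≤ u0 r0 := hu0 r0 hr0I
      have := hwp0
      simp only [hw] at this
      rw [← h] at this
      simp only [mul_zero] at this
      have hr0le : r0 ≤ 1 := hr0I.2
      nlinarith
  -- positivity before t0
  have hwpos : ∀ t ∈ Ico (0:ℝ) t0, ∀ r ∈ Icc (0:ℝ) 1, 0 < w (r, t) := by
    intro t ht r hr
    by_contra hc
    push_neg at hc
    have htS : t ∈ S := ⟨(r, t), ⟨⟨hr, ⟨ht.1, le_trans ht.2.le ht0I.2⟩⟩, hc⟩, rfl⟩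
    exact absurd (csInf_le hSc.bddBelow htS) (not_le.mpr ht.2)
  -- nonnegativity at t0
  have hw0 : ∀ r ∈ Icc (0:ℝ) 1, 0 ≤ w (r, t0) := by
    intro r hr
    have hcont1 : ContinuousOn (fun t => w (r, t)) (Icc 0 T) :=
      hwc.comp ((continuous_const.prodMk continuous_id).continuousOn)
        (fun t ht => ⟨hr, ht⟩)
    have htend : Tendsto (fun t => w (r, t)) (𝓝[Ico 0 t0] t0) (𝓝 (w (r, t0))) :=
      ((hcont1 t0 ht0I).mono_left (nhdsWithin_mono _
        (fun y hy => ⟨hy.1, le_trans hy.2.le ht0I.2⟩)))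
    haveI : (𝓝[Ico (0:ℝ) t0] t0).NeBot := by
      rw [← mem_closure_iff_nhdsWithin_neBot, closure_Ico ht0pos.ne]
      exact ⟨ht0pos.le, le_refl _⟩
    refine ge_of_tendsto htend ?_
    filter_upwards [self_mem_nhdsWithin] with y hy
    exact (hwpos y hy r hr).le
  have hwr00 : w (r0, t0) = 0 := le_antisymm hwp0 (hw0 r0 hr0I)
  -- spatial derivative facts
  have haff : ∀ r : ℝ, HasDerivAt (fun s : ℝ => δ/2 + δ/8*t0 + δ/4*s) (δ/4) r := by
    intro r
    simpa using ((hasDerivAt_id r).const_mul (δ/4)).const_add (δ/2 + δ/8*t0)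
  have hg : ∀ r ∈ Icc (0:ℝ) 1,
      HasDerivWithinAt (fun s => w (s, t0)) (ur r t0 - δ/4) (Icc 0 1) r := by
    intro r hr
    exact (hdr t0 ht0pos r hr).sub ((haff r).hasDerivWithinAt)
  have hgmin : ∀ y ∈ Icc (0:ℝ) 1, w (r0, t0) ≤ w (y, t0) := by
    intro y hy; rw [hwr00]; exact hw0 y hy
  rcases eq_or_lt_of_le hr0I.1 with h0 | h0
  · -- r0 = 0
    have hmin0 : ∀ y ∈ Icc (0:ℝ) 1, w (0, t0) ≤ w (y, t0) := by
      intro y hy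
      calc w (0, t0) = w (r0, t0) := by rw [← h0]
        _ ≤ w (y, t0) := hgmin y hy
    have hd := left_slope_nonneg (hg 0 ⟨le_refl 0, zero_le_one⟩) hmin0
    have hb := hbc0 t0 ht0pos
    rw [hb] at hd
    linarith
  rcases eq_or_lt_of_le hr0I.2 with h1 | h1
  · -- r0 = 1
    have hmin1 : ∀ y ∈ Icc (0:ℝ) 1, w (1, t0) ≤ w (y, t0) := by
      intro y hy
      calc w (1, t0) = w (r0, t0) := by rw [h1]
        _ ≤ w (y, t0) := hgmin y hy
    have hd := right_slope_nonpos (hg 1 ⟨zero_le_one, le_refl 1⟩) hmin1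
    have hb := hbc1 t0 ht0pos
    have hval : w (1, t0) = 0 := by rw [← h1]; exact hwr00
    simp only [hw] at hval
    rw [hb] at hd
    nlinarith
  · -- interior
    have hr0Ioo : r0 ∈ Ioo (0:ℝ) 1 := ⟨h0, h1⟩
    have hf' : HasDerivAt (fun s => ur s t0 - δ/4) (urr r0 t0) r0 := by
      exact ((hdr2 t0 ht0pos r0 hr0I).hasDerivAt (Icc_mem_nhds h0 h1)).sub_const _
    obtain ⟨hz, hurrpos⟩ := second_deriv_test hr0Ioo hgmin hg hf'
    have hur : ur r0 t0 = δ/4 := by linarith [hz]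
    -- time derivative
    have hafft : HasDerivAt (fun τ : ℝ => δ/2 + δ/8*τ + δ/4*r0) (δ/8) t0 := by
      simpa using (((hasDerivAt_id t0).const_mul (δ/8)).const_add (δ/2)).add_const (δ/4*r0)
    have hh : HasDerivAt (fun τ => w (r0, τ)) (ut r0 t0 - δ/8) t0 :=
      (hdt t0 ht0pos r0 hr0I).sub hafft
    have hdle : ut r0 t0 - δ/8 ≤ 0 :=
      deriv_nonpos_of_first_zero ht0pos hh hwr00
        (fun t ht => hwpos t ht r0 hr0I)
    have hpde0 := hpde t0 ht0pos r0 hr0Ioo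
    rw [hur] at hpde0
    have hub1 : 0 ≤ urr r0 t0 / (1 + (δ/4)^2) := div_nonneg hurrpos (by positivity)
    have hub2 : (1:ℝ) ≤ ((N:ℝ) - 1) / r0 := by
      rw [le_div_iff₀ h0]
      have : (2:ℝ) ≤ (N:ℝ) := by exact_mod_cast hN
      nlinarith [hr0I.2]
    nlinarith [hpde0, hub1, hub2]

/-- for every `ε ∈ (0,1)`, `sup_{r ∈ [ε,1]} |u_r(r,t)| → ∞` as `t → ∞`. -/
theorem sup_ur_tendsto_atTop (N : ℕ) (hN : 2 ≤ N) (u0 : ℝ → ℝ)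
    (hu0c : ContinuousOn u0 (Icc 0 1)) (hu0pos : ∀ r ∈ Icc (0:ℝ) 1, 0 < u0 r)
    (u ur urr ut : ℝ → ℝ → ℝ) (hu : IsGlobalClassicalSolution N u ur urr ut u0) :
    ∀ ε ∈ Ioo (0:ℝ) 1,
      Tendsto (fun t => sSup ((fun r => |ur r t|) '' Icc ε 1)) atTop atTop := by
  intro ε hε
  obtain ⟨hcontu, hcontur, hconturr, hcontut, hdr, hdr2, hdt, hpde, hbc0, hbc1, hinit⟩ := hu
  obtain ⟨x0, hx0, hx0min⟩ := isCompact_Icc.exists_isMinOn (nonempty_Icc.mpr zero_le_one) hu0c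
  set δ := u0 x0 with hδdef
  have hδ : 0 < δ := hu0pos x0 hx0
  have hu0ge : ∀ r ∈ Icc (0:ℝ) 1, δ ≤ u0 r := fun r hr => hx0min hr
  have hcomp := comparison hN hδ hu0ge hcontu hdr hdr2 hdt hpde hbc0 hbc1 hinit
  have key : ∀ t > (0:ℝ), δ/8 * t ≤ sSup ((fun r => |ur r t|) '' Icc ε 1) := by
    intro t ht
    have h1I : (1:ℝ) ∈ Icc ε 1 := ⟨hε.2.le, le_refl 1⟩
    have hcont : ContinuousOn (fun r => |ur r t|) (Icc ε 1) := by
      have hc2 : ContinuousOn (fun r => ur r t) (Icc ε 1) :=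
        hcontur.comp ((continuous_id.prodMk continuous_const).continuousOn)
          (fun r hr => ⟨⟨le_trans hε.1.le hr.1, hr.2⟩, ht⟩)
      exact hc2.abs
    have hbdd : BddAbove ((fun r => |ur r t|) '' Icc ε 1) :=
      (isCompact_Icc.image_of_continuousOn hcont).bddAbove
    have hmem : |ur 1 t| ∈ (fun r => |ur r t|) '' Icc ε 1 := mem_image_of_mem _ h1I
    have hle : δ/8 * t ≤ |ur 1 t| := by
      have h1 : ur 1 t = u 1 t := hbc1 t ht
      have h2 := hcomp t ht.le 1 ⟨zero_le_one, le_refl 1⟩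
      rw [h1, abs_of_pos (by nlinarith)]
      nlinarith
    exact le_trans hle (le_csSup hbdd hmem)
  apply tendsto_atTop_mono' atTop ?_
    (Tendsto.const_mul_atTop (by positivity : (0:ℝ) < δ/8) tendsto_id)
  filter_upwards [eventually_gt_atTop 0] with t ht using key t ht
end
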